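/- Let u_1, …, u_n be a basis of the lattice ℤ^n and u_0 := −u_1 − ⋯ − u_n. For I ⊊ {0, …, n} let σ_I be the simplicial cone in ℝ^n spanned by {u_i : i ∈ I}, and for 0 ≤ k ≤ n let L_k^n := {σ_I : |I| ≤ k}. Then L_k^n is a simplicial fan of pure dimension k in ℝ^n, and with the markings v_{σ_{{i}}} := u_i (hence all weights equal to 1) it is a tropical fan, i.e. for every τ ∈ (L_k^n)^{(k−1)} the balancing condition Σ_{σ > τ} v_{σ/τ} = 0 holds in ℝ^n/V_τ. -/

import Mathlib

open scoped BigOperators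

namespace TropFan

/-- `V N` is the real vector space `ℝ^N`. -/
abbrev V (N : ℕ) := Fin N → ℝ

/-- The lattice `ℤ^N ⊆ ℝ^N`, as an additive subgroup. -/
def latticePts (N : ℕ) : AddSubgroup (V N) where
  carrier := {x | ∀ i, ∃ m : ℤ, x i = (m : ℝ)}
  add_mem' := by
    intro a b ha hb i
    obtain ⟨m, hm⟩ := ha i
    obtain ⟨k, hk⟩ := hb i
    exact ⟨m + k, by push_cast [Pi.add_apply]; rw [hm, hk]⟩
  zero_mem' := fun i => ⟨0, by simp⟩
  neg_mem' := by
    intro a ha i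
    obtain ⟨m, hm⟩ := ha i
    exact ⟨-m, by push_cast [Pi.neg_apply]; rw [hm]⟩

/-- Evaluation of the integral linear form with coefficients `c` on `x`. -/
def evalForm {N : ℕ} (c : Fin N → ℤ) (x : V N) : ℝ := ∑ i, (c i : ℝ) * x i

/-- A (rational polyhedral) cone in `ℝ^N`: a subset cut out by finitely many
integral linear equalities and inequalities. -/
def IsCone {N : ℕ} (σ : Set (V N)) : Prop :=
  ∃ (n m : ℕ) (f : Fin n → Fin N → ℤ) (g : Fin m → Fin N → ℤ),
    σ = {x | (∀ i, evalForm (f i) x = 0) ∧ ∀ j, 0 ≤ evalForm (g j) x}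

/-- `τ` is a face of `σ` (obtained by turning some defining inequalities into
equalities; equivalently, cut out on `σ` by an integral supporting form). -/
def IsFace {N : ℕ} (τ σ : Set (V N)) : Prop :=
  IsCone τ ∧ IsCone σ ∧ τ ⊆ σ ∧
    ∃ c : Fin N → ℤ, (∀ x ∈ σ, 0 ≤ evalForm c x) ∧ τ = {x ∈ σ | evalForm c x = 0}

/-- `V_σ`, the linear span of the cone `σ`. -/
def coneSpan {N : ℕ} (σ : Set (V N)) : Submodule ℝ (V N) := Submodule.span ℝ σ

/-- The dimension of a cone. -/
noncomputable def coneDim {N : ℕ} (σ : Set (V N)) : ℕ := Module.finrank ℝ ↥(coneSpan σ)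

/-- `Λ_σ = V_σ ∩ ℤ^N`. -/
def coneLattice {N : ℕ} (σ : Set (V N)) : AddSubgroup (V N) :=
  (coneSpan σ).toAddSubgroup ⊓ latticePts N

/-- `u ∈ Λ_σ` represents the primitive normal vector `u_{σ/τ}` of `σ` relative to
its codimension-one face `τ`: together with `Λ_τ` it generates `Λ_σ`, and it lies
on the `σ`-side of `V_τ`. -/
def IsNormalVector {N : ℕ} (τ σ : Set (V N)) (u : V N) : Prop :=
  u ∈ coneLattice σ ∧
  (∀ x ∈ coneLattice σ, ∃ k : ℤ, x - k • u ∈ coneLattice τ) ∧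
  ∃ g : (V N) →ₗ[ℝ] ℝ, (∀ x ∈ coneSpan τ, g x = 0) ∧ (∀ x ∈ σ, 0 ≤ g x) ∧ 0 < g u

/-- A fan in `ℝ^N`: a finite set of cones, closed under passing to faces, such
that the intersection of any two of its cones is a face of each. -/
structure Fan (N : ℕ) where
  cones : Set (Set (V N))
  finite : cones.Finite
  isCone : ∀ σ ∈ cones, IsCone σ
  faces_mem : ∀ σ ∈ cones, ∀ τ, IsFace τ σ → τ ∈ cones
  inter_face : ∀ σ₁ ∈ cones, ∀ σ₂ ∈ cones, IsFace (σ₁ ∩ σ₂) σ₁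

/-- The support `|X|` of a fan: the union of its cones. -/
def Fan.support {N : ℕ} (X : Fan N) : Set (V N) := ⋃ σ ∈ X.cones, σ

/-- `X^{(k)}`, the set of `k`-dimensional cones of `X`. -/
def Fan.conesOfDim {N : ℕ} (X : Fan N) (k : ℕ) : Set (Set (V N)) :=
  {σ | σ ∈ X.cones ∧ coneDim σ = k}

/-- A fan is pure of dimension `n` if every cone is contained in an
`n`-dimensional cone of the fan. -/
def Fan.IsPure {N : ℕ} (X : Fan N) (n : ℕ) : Prop :=
  ∀ σ ∈ X.cones, ∃ σ', σ' ∈ X.conesOfDim n ∧ σ ⊆ σ'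

/-- The balancing condition for a fan `X` of pure dimension `n` with weights `w`:
for each codimension-one cone `τ` and for each choice of primitive normal vectors
`u σ = u_{σ/τ}`, the weighted sum `Σ_{σ > τ} w(σ) • u_{σ/τ}` vanishes modulo `V_τ`. -/
def IsBalanced {N : ℕ} (X : Fan N) (n : ℕ) (w : Set (V N) → ℤ) : Prop :=
  ∀ τ ∈ X.conesOfDim (n - 1),
    ∀ u : Set (V N) → V N,
      (∀ σ ∈ X.conesOfDim n, IsFace τ σ → τ ≠ σ → IsNormalVector τ σ (u σ)) →
      (∑ᶠ σ ∈ {σ | σ ∈ X.conesOfDim n ∧ IsFace τ σ ∧ τ ≠ σ}, w σ • u σ) ∈ coneSpan τ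

/-- A weighted fan of dimension `n`: a pure `n`-dimensional fan together with
positive integer weights on its `n`-dimensional cones. -/
structure WeightedFan (N n : ℕ) extends Fan N where
  pure : toFan.IsPure n
  weight : Set (V N) → ℤ
  weight_pos : ∀ σ ∈ toFan.conesOfDim n, 0 < weight σ

/-- A tropical fan is a weighted fan satisfying the balancing condition. -/
def WeightedFan.IsTropical {N n : ℕ} (X : WeightedFan N n) : Prop :=
  IsBalanced X.toFan n X.weight

/-- `Y` is a subfan of `X`. -/
def IsSubfan {N : ℕ} (Y X : Fan N) : Prop := ∀ σ ∈ Y.cones, ∃ σ' ∈ X.cones, σ ⊆ σ'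

/-- `σ'` is the inclusion-minimal cone `C_{Y,X}(σ)` of `X` containing `σ`. -/
def IsMinConeOver {N : ℕ} (X : Fan N) (σ σ' : Set (V N)) : Prop :=
  σ' ∈ X.cones ∧ σ ⊆ σ' ∧ ∀ σ'' ∈ X.cones, σ ⊆ σ'' → σ' ⊆ σ''

/-- `(Y, ω_Y)` is a refinement of `(X, ω_X)`. -/
def IsRefinement {N n : ℕ} (Y X : WeightedFan N n) : Prop :=
  IsSubfan Y.toFan X.toFan ∧
  Y.toFan.support = X.toFan.support ∧
  ∀ σ ∈ Y.toFan.conesOfDim n, ∀ σ', IsMinConeOver X.toFan σ σ' → Y.weight σ = X.weight σ'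

/-- A tropical fan is irreducible if there is no (nonempty) tropical fan of the
same dimension whose support is a proper subset of its support. -/
def IsIrreducible {N n : ℕ} (X : WeightedFan N n) : Prop :=
  ¬ ∃ Y : WeightedFan N n, Y.IsTropical ∧ (Y.toFan.conesOfDim n).Nonempty ∧
      Y.toFan.support ⊂ X.toFan.support

/-- A simplicial (rational) cone: the nonnegative span of finitely many linearly
independent lattice vectors. -/
def IsSimplicialCone {N : ℕ} (σ : Set (V N)) : Prop :=
  ∃ (k : ℕ) (v : Fin k → V N), LinearIndependent ℝ v ∧ (∀ i, v i ∈ latticePts N) ∧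
    σ = {x | ∃ c : Fin k → ℝ, (∀ i, 0 ≤ c i) ∧ x = ∑ i, c i • v i}

/-- A marked fan: a pure `n`-dimensional simplicial fan together with a choice
of an integral generator (marking) of each of its edges. -/
structure MarkedFan (N n : ℕ) extends Fan N where
  pure : toFan.IsPure n
  simplicial : ∀ σ ∈ cones, IsSimplicialCone σ
  mark : Set (V N) → V N
  mark_mem : ∀ σ ∈ toFan.conesOfDim 1, mark σ ∈ σ ∧ mark σ ≠ 0 ∧ mark σ ∈ latticePts N

/-- The sublattice `Λ̃_σ ⊆ Λ_σ` generated by the markings of the edges of `σ`. -/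
def MarkedFan.markLattice {N n : ℕ} (X : MarkedFan N n) (σ : Set (V N)) : AddSubgroup (V N) :=
  AddSubgroup.closure (X.mark '' {e | e ∈ X.toFan.conesOfDim 1 ∧ IsFace e σ})

/-- The weight `ω(σ) = |Λ_σ / Λ̃_σ|` of a cone of a marked fan. -/
noncomputable def MarkedFan.weight {N n : ℕ} (X : MarkedFan N n) (σ : Set (V N)) : ℕ :=
  (X.markLattice σ).relIndex (coneLattice σ)

/-- `v = v_{σ/τ}`: `v` is the marking of an edge of `σ` which is not a face of `τ`. -/
def MarkedFan.IsRelMark {N n : ℕ} (X : MarkedFan N n) (σ τ : Set (V N)) (v : V N) : Prop :=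
  ∃ e, e ∈ X.toFan.conesOfDim 1 ∧ IsFace e σ ∧ ¬ IsFace e τ ∧ v = X.mark e


section S5
variable {n : ℕ}

/-- The cone spanned by `{uu i : i ∈ I}`. -/
def sig (uu : Fin (n + 1) → V n) (I : Finset (Fin (n + 1))) : Set (V n) :=
  {x | ∃ c : Fin (n + 1) → ℝ, (∀ i, 0 ≤ c i) ∧ (∀ i ∉ I, c i = 0) ∧ x = ∑ i, c i • uu i}

/-- standard basis vector as a lattice point -/
lemma single_mem_lattice (i : Fin n) : (fun j => if i = j then (1:ℝ) else 0) ∈ latticePts n := by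
  intro j
  by_cases h : i = j
  · exact ⟨1, by simp [h]⟩
  · exact ⟨0, by simp [h]⟩

lemma top_le_span_of_closure (f : Fin n → V n)
    (h : AddSubgroup.closure (Set.range f) = latticePts n) :
    ⊤ ≤ Submodule.span ℝ (Set.range f) := by
  intro x _
  have hsingle : ∀ i : Fin n, (fun j => if i = j then (1:ℝ) else 0) ∈
      Submodule.span ℝ (Set.range f) := by
    intro i
    have h1 : (fun j => if i = j then (1:ℝ) else 0) ∈ AddSubgroup.closure (Set.range f) := by
      rw [h]; exact single_mem_lattice i
    have h2 : AddSubgroup.closure (Set.range f) ≤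
        (Submodule.span ℝ (Set.range f)).toAddSubgroup :=
      AddSubgroup.closure_le _ |>.mpr Submodule.subset_span
    exact h2 h1
  rw [pi_eq_sum_univ x]
  exact Submodule.sum_mem _ fun i _ => Submodule.smul_mem _ _ (hsingle i)

lemma li_of_closure (f : Fin n → V n)
    (h : AddSubgroup.closure (Set.range f) = latticePts n) : LinearIndependent ℝ f :=
  linearIndependent_of_top_le_span_of_card_eq_finrank (top_le_span_of_closure f h)
    (by simp [Module.finrank_fin_fun])

variable (uu : Fin (n + 1) → V n)
variable (hbasis : AddSubgroup.closure (Set.range fun i : Fin n => uu i.succ) = latticePts n)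
variable (hsum : ∑ i, uu i = 0)
include hbasis hsum

lemma uu_mem_lattice (i : Fin (n + 1)) : uu i ∈ latticePts n := by
  rcases Fin.eq_zero_or_eq_succ i with h0 | ⟨m, hm⟩
  · subst h0
    have : uu 0 = -∑ m : Fin n, uu m.succ :=
      eq_neg_of_add_eq_zero_left (by rw [← Fin.sum_univ_succ uu]; exact hsum)
    rw [this]
    refine neg_mem ?_
    refine AddSubgroup.sum_mem _ fun m _ => ?_
    rw [← hbasis]
    exact AddSubgroup.subset_closure ⟨m, rfl⟩
  · subst hm
    rw [← hbasis]
    exact AddSubgroup.subset_closure ⟨m, rfl⟩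

lemma closure_w (j : Fin (n + 1)) :
    AddSubgroup.closure (Set.range fun m : Fin n => uu (j.succAbove m)) = latticePts n := by
  apply le_antisymm
  · rw [AddSubgroup.closure_le]
    rintro x ⟨m, rfl⟩
    exact uu_mem_lattice uu hbasis hsum _
  · rw [← hbasis, AddSubgroup.closure_le]
    rintro x ⟨m, rfl⟩
    by_cases hmj : m.succ = j
    · have hs : uu j = -∑ m : Fin n, uu (j.succAbove m) :=
        eq_neg_of_add_eq_zero_left (by rw [← Fin.sum_univ_succAbove uu j]; exact hsum)
      show uu m.succ ∈ _
      rw [hmj, hs]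
      exact neg_mem (AddSubgroup.sum_mem _ fun m' _ => AddSubgroup.subset_closure ⟨m', rfl⟩)
    · obtain ⟨z, hz⟩ := Fin.exists_succAbove_eq hmj
      exact AddSubgroup.subset_closure ⟨z, by show uu _ = uu _; rw [hz]⟩

/-- The basis of `ℝ^n` given by the `uu i` with `i ≠ j`. -/
noncomputable def bas (j : Fin (n + 1)) : Module.Basis (Fin n) ℝ (V n) :=
  Module.Basis.mk (li_of_closure _ (closure_w uu hbasis hsum j))
    (top_le_span_of_closure _ (closure_w uu hbasis hsum j))

lemma bas_apply (j : Fin (n + 1)) (m : Fin n) :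
    bas uu hbasis hsum j m = uu (j.succAbove m) := by
  simp [bas]

lemma repr_int (j : Fin (n + 1)) {x : V n} (hx : x ∈ latticePts n) (m : Fin n) :
    ∃ z : ℤ, (bas uu hbasis hsum j).repr x m = z := by
  rw [← closure_w uu hbasis hsum j] at hx
  induction hx using AddSubgroup.closure_induction with
  | mem x hx =>
    obtain ⟨m', rfl⟩ := hx
    rw [show (fun m => uu (j.succAbove m)) m' = bas uu hbasis hsum j m' from
      (bas_apply uu hbasis hsum j m').symm, Module.Basis.repr_self]
    by_cases h : m' = m
    · exact ⟨1, by simp [h]⟩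
    · exact ⟨0, by simp [Finsupp.single_apply, h]⟩
  | zero => exact ⟨0, by simp⟩
  | add x y _ _ hx hy =>
    obtain ⟨z1, h1⟩ := hx; obtain ⟨z2, h2⟩ := hy
    exact ⟨z1 + z2, by rw [map_add]; push_cast [Finsupp.add_apply, h1, h2]; ring⟩
  | neg x _ hx =>
    obtain ⟨z, h⟩ := hx
    exact ⟨-z, by rw [map_neg]; push_cast [Finsupp.neg_apply, h]; ring⟩

end S5
section S5b
variable {n : ℕ} (uu : Fin (n + 1) → V n)
variable (hbasis : AddSubgroup.closure (Set.range fun i : Fin n => uu i.succ) = latticePts n)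
variable (hsum : ∑ i, uu i = 0)
include hbasis hsum

/-- if a linear combination of the `uu i` vanishes, all coefficients are equal. -/
lemma coeff_const (d : Fin (n + 1) → ℝ) (hd : ∑ i, d i • uu i = 0) (i : Fin (n + 1)) :
    d i = d 0 := by
  have li := li_of_closure _ hbasis
  have he : ∑ i, (d i - d 0) • uu i = 0 := by
    simp only [sub_smul, Finset.sum_sub_distrib, hd, ← Finset.smul_sum, hsum, smul_zero,
      sub_zero]
  rw [Fin.sum_univ_succ] at he
  simp only [sub_self, zero_smul, zero_add] at he
  have := (Fintype.linearIndependent_iff.mp li) (fun m => d m.succ - d 0) he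
  rcases Fin.eq_zero_or_eq_succ i with h0 | ⟨m, hm⟩
  · rw [h0]
  · have := this m
    rw [hm]
    linarith [sub_eq_zero.mp (this)]

lemma mem_sig_iff {I : Finset (Fin (n + 1))} {j : Fin (n + 1)} (hj : j ∉ I) (x : V n) :
    x ∈ sig uu I ↔ ∀ m : Fin n,
      0 ≤ (bas uu hbasis hsum j).repr x m ∧
        (j.succAbove m ∉ I → (bas uu hbasis hsum j).repr x m = 0) := by
  set B := bas uu hbasis hsum j with hB
  constructor
  · rintro ⟨c, hc0, hcI, rfl⟩
    have hx : ∑ i, c i • uu i = ∑ m : Fin n, c (j.succAbove m) • B m := by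
      rw [Fin.sum_univ_succAbove (fun i => c i • uu i) j, hcI j hj, zero_smul, zero_add]
      exact Finset.sum_congr rfl fun m _ => by rw [hB, bas_apply]
    rw [hx]
    intro m
    rw [Module.Basis.repr_sum_self]
    exact ⟨hc0 _, fun h => hcI _ h⟩
  · intro h
    set c : Fin (n + 1) → ℝ := j.insertNth 0 (fun m => B.repr x m) with hc
    have hcj : c j = 0 := Fin.insertNth_apply_same j 0 _
    have hcs : ∀ m, c (j.succAbove m) = B.repr x m := fun m =>
      Fin.insertNth_apply_succAbove j 0 _ m
    refine ⟨c, ?_, ?_, ?_⟩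
    · intro i
      refine Fin.succAboveCases (α := fun i => 0 ≤ c i) j ?_ (fun m => ?_) i
      · show 0 ≤ c j; rw [hcj]
      · show 0 ≤ c (j.succAbove m); rw [hcs]; exact (h m).1
    · intro i
      refine Fin.succAboveCases (α := fun i => i ∉ I → c i = 0) j ?_ (fun m hi => ?_) i
      · intro _; exact hcj
      · show c (j.succAbove m) = 0; rw [hcs]; exact (h m).2 hi
    · have h1 : ∑ i, c i • uu i = ∑ m : Fin n, B.repr x m • B m := by
        rw [Fin.sum_univ_succAbove (fun i => c i • uu i) j, hcj, zero_smul, zero_add]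
        exact Finset.sum_congr rfl fun m _ => by rw [hcs, hB, bas_apply]
      rw [h1, B.sum_repr]

end S5b
section S5c
variable {n : ℕ}

lemma evalForm_zero_coeff (x : V n) : evalForm (fun _ => (0:ℤ)) x = 0 := by
  simp [evalForm]

lemma evalForm_sum_coeff {α : Type*} (cs : α → Fin n → ℤ) (s : Finset α) (x : V n) :
    evalForm (fun i => ∑ m ∈ s, cs m i) x = ∑ m ∈ s, evalForm (cs m) x := by
  simp only [evalForm]
  rw [Finset.sum_comm]
  push_cast
  simp [Finset.sum_mul]

lemma exists_int_form (g : V n →ₗ[ℝ] ℝ)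
    (hg : ∀ x ∈ latticePts n, ∃ z : ℤ, g x = z) :
    ∃ c : Fin n → ℤ, ∀ x, evalForm c x = g x := by
  choose z hz using fun i => hg _ (single_mem_lattice i)
  refine ⟨z, fun x => ?_⟩
  conv_rhs => rw [pi_eq_sum_univ x, map_sum]
  simp only [map_smul, smul_eq_mul, hz, evalForm]
  exact Finset.sum_congr rfl fun i _ => mul_comm _ _

variable (uu : Fin (n + 1) → V n)
variable (hbasis : AddSubgroup.closure (Set.range fun i : Fin n => uu i.succ) = latticePts n)
variable (hsum : ∑ i, uu i = 0)

/-- integral coefficient vectors of the coordinate forms of the basis `bas j`. -/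
noncomputable def cf (j : Fin (n + 1)) (m : Fin n) : Fin n → ℤ :=
  (exists_int_form ((bas uu hbasis hsum j).coord m)
    (fun x hx => repr_int uu hbasis hsum j hx m)).choose

lemma cf_spec (j : Fin (n + 1)) (m : Fin n) (x : V n) :
    evalForm (cf uu hbasis hsum j m) x = (bas uu hbasis hsum j).repr x m :=
  (exists_int_form ((bas uu hbasis hsum j).coord m)
    (fun x hx => repr_int uu hbasis hsum j hx m)).choose_spec x

include hbasis hsum

lemma isCone_sig {I : Finset (Fin (n + 1))} {j : Fin (n + 1)} (hj : j ∉ I) :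
    IsCone (sig uu I) := by
  refine ⟨n, n, fun m => if j.succAbove m ∈ I then (fun _ => 0) else cf uu hbasis hsum j m,
    fun m => cf uu hbasis hsum j m, ?_⟩
  ext x
  rw [Set.mem_setOf_eq, mem_sig_iff uu hbasis hsum hj x]
  constructor
  · intro h
    refine ⟨fun m => ?_, fun m => ?_⟩
    · by_cases hm : j.succAbove m ∈ I
      · simp only [hm, if_pos]; exact evalForm_zero_coeff x
      · simp only [hm, if_neg, not_false_iff]
        rw [cf_spec]
        exact (h m).2 hm
    · rw [cf_spec]; exact (h m).1
  · rintro ⟨h1, h2⟩ m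
    refine ⟨by rw [← cf_spec uu hbasis hsum j m x]; exact h2 m, fun hm => ?_⟩
    have := h1 m
    simp only [hm, if_neg, not_false_iff] at this
    rw [← cf_spec uu hbasis hsum j m x]
    exact this

omit hbasis hsum in
lemma zero_mem_sig (I : Finset (Fin (n + 1))) : 0 ∈ sig uu I :=
  ⟨0, fun _ => le_refl _, fun _ _ => rfl, by simp⟩

omit hbasis hsum in
lemma sig_mono {I I' : Finset (Fin (n + 1))} (h : I ⊆ I') : sig uu I ⊆ sig uu I' := by
  rintro x ⟨c, hc0, hcI, rfl⟩
  exact ⟨c, hc0, fun i hi => hcI i (fun hiI => hi (h hiI)), rfl⟩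

omit hbasis hsum in
lemma uu_mem_sig {I : Finset (Fin (n + 1))} {i : Fin (n + 1)} (hi : i ∈ I) :
    uu i ∈ sig uu I := by
  refine ⟨fun i' => if i' = i then 1 else 0, fun i' => by positivity, fun i' hi' => ?_, ?_⟩
  · simp only [ite_eq_right_iff]; rintro rfl; exact absurd hi hi'
  · rw [Finset.sum_eq_single i (fun b _ hb => by simp [hb]) (by simp)]
    simp

lemma isFace_sig {J I : Finset (Fin (n + 1))} {j : Fin (n + 1)} (hJI : J ⊆ I) (hj : j ∉ I) :
    IsFace (sig uu J) (sig uu I) := by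
  have hjJ : j ∉ J := fun h => hj (hJI h)
  set B := bas uu hbasis hsum j with hB
  set M : Finset (Fin n) :=
    Finset.univ.filter (fun m => j.succAbove m ∈ I ∧ j.succAbove m ∉ J) with hM
  refine ⟨isCone_sig uu hbasis hsum hjJ, isCone_sig uu hbasis hsum hj,
    sig_mono uu hJI, fun i => ∑ m ∈ M, cf uu hbasis hsum j m i, ?_, ?_⟩
  · intro x hx
    rw [evalForm_sum_coeff]
    refine Finset.sum_nonneg fun m _ => ?_
    rw [cf_spec]
    exact (((mem_sig_iff uu hbasis hsum hj x).mp hx) m).1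
  · ext x
    simp only [Set.mem_setOf_eq, evalForm_sum_coeff]
    rw [mem_sig_iff uu hbasis hsum hjJ x, mem_sig_iff uu hbasis hsum hj x]
    constructor
    · intro h
      refine ⟨fun m => ⟨(h m).1, fun hm => (h m).2 fun hmJ => hm (hJI hmJ)⟩, ?_⟩
      refine Finset.sum_eq_zero fun m hm => ?_
      rw [cf_spec]
      exact (h m).2 (Finset.mem_filter.mp hm).2.2
    · rintro ⟨h1, h2⟩ m
      refine ⟨(h1 m).1, fun hm => ?_⟩
      by_cases hmI : j.succAbove m ∈ I
      · have hsum0 := (Finset.sum_eq_zero_iff_of_nonneg (fun m _ => by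
          rw [cf_spec]; exact (h1 m).1)).mp h2 m
            (Finset.mem_filter.mpr ⟨Finset.mem_univ m, hmI, hm⟩)
        rw [cf_spec] at hsum0
        exact hsum0
      · exact (h1 m).2 hmI

end S5c
section S5d
variable {n : ℕ}

/-- `evalForm c` as a linear map. -/
def evalFormL (c : Fin n → ℤ) : V n →ₗ[ℝ] ℝ where
  toFun := evalForm c
  map_add' x y := by simp [evalForm, mul_add, Finset.sum_add_distrib]
  map_smul' a x := by simp [evalForm, Finset.mul_sum]; exact Finset.sum_congr rfl fun i _ => by ring

lemma evalForm_sum_smul (c : Fin n → ℤ) {α : Type*} (s : Finset α) (d : α → ℝ)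
    (v : α → V n) : evalForm c (∑ i ∈ s, d i • v i) = ∑ i ∈ s, d i * evalForm c (v i) := by
  have := map_sum (evalFormL c) (fun i => d i • v i) s
  simp only [map_smul, smul_eq_mul] at this
  exact this

variable (uu : Fin (n + 1) → V n)
variable (hbasis : AddSubgroup.closure (Set.range fun i : Fin n => uu i.succ) = latticePts n)
variable (hsum : ∑ i, uu i = 0)

omit hbasis hsum in
lemma sig_eq_sum_over (I : Finset (Fin (n + 1))) (c : Fin (n + 1) → ℝ)
    (hcI : ∀ i ∉ I, c i = 0) : ∑ i, c i • uu i = ∑ i ∈ I, c i • uu i :=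
  (Finset.sum_subset (Finset.subset_univ I) (fun i _ hi => by rw [hcI i hi, zero_smul])).symm

include hbasis hsum

/-- the vectors `uu i`, `i ∈ I`, are linearly independent when `I` misses some `j`. -/
lemma li_sig {I : Finset (Fin (n + 1))} {j : Fin (n + 1)} (hj : j ∉ I) :
    LinearIndependent ℝ (fun i : {x // x ∈ I} => uu i) := by
  set B := bas uu hbasis hsum j with hB
  have hne : ∀ i : {x // x ∈ I}, (i : Fin (n + 1)) ≠ j := fun i hij =>
    hj (hij ▸ i.2)
  choose e he using fun i : {x // x ∈ I} => Fin.exists_succAbove_eq (hne i)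
  have hinj : Function.Injective e := fun i i' h => by
    apply Subtype.ext
    rw [← he i, ← he i', h]
  have := B.linearIndependent.comp e hinj
  convert this using 1
  funext i
  rw [Function.comp_apply, hB, bas_apply, he]

lemma coneSpan_sig (I : Finset (Fin (n + 1))) :
    coneSpan (sig uu I) = Submodule.span ℝ (uu '' I) := by
  apply le_antisymm
  · rw [coneSpan, Submodule.span_le]
    rintro x ⟨c, _, hcI, rfl⟩
    rw [sig_eq_sum_over uu I c hcI]
    exact Submodule.sum_mem _ fun i hi =>
      Submodule.smul_mem _ _ (Submodule.subset_span ⟨i, hi, rfl⟩)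
  · rw [Submodule.span_le]
    rintro x ⟨i, hi, rfl⟩
    exact Submodule.subset_span (uu_mem_sig uu hi)

lemma coneDim_sig {I : Finset (Fin (n + 1))} {j : Fin (n + 1)} (hj : j ∉ I) :
    coneDim (sig uu I) = I.card := by
  rw [coneDim, coneSpan_sig uu hbasis hsum I]
  rw [show uu '' ↑I = Set.range (fun i : {x // x ∈ I} => uu i) from Set.image_eq_range uu ↑I,
    finrank_span_eq_card (li_sig uu hbasis hsum hj), Fintype.card_coe]

lemma coneLattice_sig {I : Finset (Fin (n + 1))} {j : Fin (n + 1)} (hj : j ∉ I) :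
    coneLattice (sig uu I) = AddSubgroup.closure (uu '' I) := by
  set B := bas uu hbasis hsum j with hB
  apply le_antisymm
  · intro x hx
    rw [coneLattice, AddSubgroup.mem_inf] at hx
    obtain ⟨hx1, hx2⟩ := hx
    rw [Submodule.mem_toAddSubgroup] at hx1
    have hxs : x ∈ Submodule.span ℝ (uu '' I) := by
      rw [← coneSpan_sig uu hbasis hsum I]; exact hx1
    -- coordinates of x outside I vanish
    have hsupp : ∀ m : Fin n, j.succAbove m ∉ I → B.repr x m = 0 := by
      have hle : Submodule.span ℝ (uu '' I) ≤
          ⨅ (m : Fin n) (_ : j.succAbove m ∉ I), LinearMap.ker (B.coord m) := by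
        rw [Submodule.span_le]
        rintro y ⟨i, hi, rfl⟩
        simp only [SetLike.mem_coe, Submodule.mem_iInf, LinearMap.mem_ker]
        intro m hm
        have hne : (i : Fin (n + 1)) ≠ j := fun hij => hj (hij ▸ hi)
        obtain ⟨mi, hmi⟩ := Fin.exists_succAbove_eq hne
        have : uu i = B mi := by rw [hB, bas_apply, hmi]
        rw [Module.Basis.coord_apply, this, Module.Basis.repr_self]
        have hne2 : mi ≠ m := fun h => hm (h ▸ hmi ▸ hi)
        simp [Finsupp.single_apply, hne2]
      have := hle hxs
      simp only [SetLike.mem_coe, Submodule.mem_iInf, LinearMap.mem_ker] at this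
      intro m hm
      have := this m hm
      rwa [Module.Basis.coord_apply] at this
    choose z hz using fun m => repr_int uu hbasis hsum j hx2 m
    rw [← B.sum_repr x]
    refine AddSubgroup.sum_mem _ fun m _ => ?_
    by_cases hm : j.succAbove m ∈ I
    · have hzs : (B.repr x) m • B m = (z m) • B m := by
        rw [hz m, Int.cast_smul_eq_zsmul]
      rw [hzs]
      have hmem : B m ∈ uu '' ↑I := ⟨j.succAbove m, hm, (bas_apply uu hbasis hsum j m).symm⟩
      exact AddSubgroup.zsmul_mem _ (AddSubgroup.subset_closure hmem) _
    · rw [hsupp m hm, zero_smul]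
      exact AddSubgroup.zero_mem _
  · rw [AddSubgroup.closure_le]
    rintro x ⟨i, hi, rfl⟩
    refine AddSubgroup.mem_inf.mpr ⟨?_, uu_mem_lattice uu hbasis hsum i⟩
    exact (Submodule.mem_toAddSubgroup _).mpr (Submodule.subset_span (uu_mem_sig uu hi))

/-- membership of a generator forces its index to lie in `I` (needs `n ≥ 1`). -/
lemma uu_mem_sig_index (hn : 0 < n) {I : Finset (Fin (n + 1))} {i0 : Fin (n + 1)}
    (hI : uu i0 ∈ sig uu I) : i0 ∈ I := by
  by_contra hi0
  obtain ⟨c, hc0, hcI, hx⟩ := hI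
  set d : Fin (n + 1) → ℝ := fun i => c i - if i = i0 then 1 else 0 with hd
  have hd0 : ∑ i, d i • uu i = 0 := by
    simp only [hd, sub_smul, ite_smul, one_smul, zero_smul, Finset.sum_sub_distrib]
    rw [← hx]
    rw [Finset.sum_ite_eq' Finset.univ i0 uu]
    simp
  have hconst := coeff_const uu hbasis hsum d hd0
  have hdi0 : d i0 = -1 := by simp [hd, hcI i0 hi0]
  have : Nontrivial (Fin (n + 1)) := Fin.nontrivial_iff_two_le.mpr (by omega)
  obtain ⟨i1, hi1⟩ := exists_ne i0
  have hdi1 : d i1 = c i1 := by simp [hd, hi1]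
  have h1 : d i1 = d i0 := by rw [hconst i1, hconst i0]
  have := hc0 i1
  rw [hdi0, hdi1] at h1
  linarith

lemma sig_inter {I I' : Finset (Fin (n + 1))} (hI : I ≠ Finset.univ)
    (hI' : I' ≠ Finset.univ) :
    sig uu I ∩ sig uu I' = sig uu (I ∩ I') := by
  apply Set.Subset.antisymm
  · rintro x ⟨⟨c, hc0, hcI, rfl⟩, ⟨c', hc'0, hc'I, hx'⟩⟩
    have hd0 : ∑ i, (c i - c' i) • uu i = 0 := by
      simp only [sub_smul, Finset.sum_sub_distrib, ← hx', sub_self]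
    have hconst := coeff_const uu hbasis hsum _ hd0
    obtain ⟨j, hj⟩ : ∃ j, j ∉ I := by
      by_contra h; push_neg at h; exact hI (Finset.eq_univ_iff_forall.mpr h)
    obtain ⟨j', hj'⟩ : ∃ j', j' ∉ I' := by
      by_contra h; push_neg at h; exact hI' (Finset.eq_univ_iff_forall.mpr h)
    have h1 : c 0 - c' 0 ≤ 0 := by
      have := hconst j
      rw [hcI j hj] at this
      linarith [hc'0 j]
    have h2 : 0 ≤ c 0 - c' 0 := by
      have := hconst j'
      rw [hc'I j' hj'] at this
      linarith [hc0 j']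
    have heq : ∀ i, c i = c' i := fun i => by
      have := hconst i
      have h0 : c 0 - c' 0 = 0 := le_antisymm h1 h2
      rw [h0] at this
      linarith
    refine ⟨c, hc0, fun i hi => ?_, rfl⟩
    rw [Finset.mem_inter, not_and_or] at hi
    rcases hi with hi | hi
    · exact hcI i hi
    · rw [heq i]; exact hc'I i hi
  · intro x hx
    exact ⟨sig_mono uu Finset.inter_subset_left hx, sig_mono uu Finset.inter_subset_right hx⟩

end S5d
section S5e
variable {n : ℕ}
variable (uu : Fin (n + 1) → V n)
variable (hbasis : AddSubgroup.closure (Set.range fun i : Fin n => uu i.succ) = latticePts n)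
variable (hsum : ∑ i, uu i = 0)

/-- every face of `sig uu I` is of the form `sig uu J`, `J ⊆ I`. -/
lemma face_of_sig {I : Finset (Fin (n + 1))} {τ : Set (V n)}
    (hface : IsFace τ (sig uu I)) : ∃ J, J ⊆ I ∧ τ = sig uu J := by
  classical
  obtain ⟨_, _, hsub, c, hc_nonneg, hτ⟩ := hface
  set J := I.filter (fun i => evalForm c (uu i) = 0) with hJ
  refine ⟨J, Finset.filter_subset _ _, ?_⟩
  rw [hτ]
  ext x
  constructor
  · rintro ⟨⟨d, hd0, hdI, rfl⟩, hx0⟩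
    rw [evalForm_sum_smul] at hx0
    have hterm : ∀ i ∈ Finset.univ, 0 ≤ d i * evalForm c (uu i) := by
      intro i _
      by_cases hiI : i ∈ I
      · exact mul_nonneg (hd0 i) (hc_nonneg _ (uu_mem_sig uu hiI))
      · rw [hdI i hiI, zero_mul]
    have hzero := (Finset.sum_eq_zero_iff_of_nonneg hterm).mp hx0
    refine ⟨fun i => if i ∈ J then d i else 0, fun i => ?_, fun i hi => if_neg hi, ?_⟩
    · show (0:ℝ) ≤ if i ∈ J then d i else 0
      by_cases hiJ : i ∈ J
      · rw [if_pos hiJ]; exact hd0 i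
      · rw [if_neg hiJ]
    · refine Finset.sum_congr rfl fun i _ => ?_
      show d i • uu i = (if i ∈ J then d i else 0) • uu i
      by_cases hiJ : i ∈ J
      · rw [if_pos hiJ]
      · rw [if_neg hiJ, zero_smul]
        by_cases hiI : i ∈ I
        · have hev : evalForm c (uu i) ≠ 0 := by
            intro h
            exact hiJ (Finset.mem_filter.mpr ⟨hiI, h⟩)
          have := hzero i (Finset.mem_univ i)
          rcases mul_eq_zero.mp this with h | h
          · rw [h, zero_smul]
          · exact absurd h hev
        · rw [hdI i hiI, zero_smul]
  · rintro ⟨d, hd0, hdJ, rfl⟩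
    refine ⟨sig_mono uu (Finset.filter_subset _ _) ⟨d, hd0, hdJ, rfl⟩, ?_⟩
    show evalForm c _ = 0
    rw [evalForm_sum_smul]
    refine Finset.sum_eq_zero fun i _ => ?_
    by_cases hiJ : i ∈ J
    · rw [(Finset.mem_filter.mp hiJ).2, mul_zero]
    · rw [hdJ i hiJ, zero_mul]

include hbasis hsum in
lemma simplicial_sig {I : Finset (Fin (n + 1))} {j : Fin (n + 1)} (hj : j ∉ I) :
    IsSimplicialCone (sig uu I) := by
  classical
  set g := I.orderIsoOfFin rfl with hg
  refine ⟨I.card, fun m => uu (g m), ?_, fun m => uu_mem_lattice uu hbasis hsum _, ?_⟩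
  · exact (li_sig uu hbasis hsum hj).comp g.toEquiv g.toEquiv.injective
  · ext x
    constructor
    · rintro ⟨c, hc0, hcI, rfl⟩
      refine ⟨fun m => c (g m), fun m => hc0 _, ?_⟩
      rw [sig_eq_sum_over uu I c hcI, ← Finset.sum_coe_sort I (fun i => c i • uu i)]
      exact (Fintype.sum_equiv g.toEquiv _ _ fun m => rfl).symm
    · rintro ⟨c, hc0, rfl⟩
      refine ⟨fun i => if h : i ∈ I then c (g.symm ⟨i, h⟩) else 0, fun i => ?_,
        fun i hi => dif_neg hi, ?_⟩
      · show 0 ≤ if h : i ∈ I then c (g.symm ⟨i, h⟩) else 0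
        by_cases h : i ∈ I
        · rw [dif_pos h]; exact hc0 _
        · rw [dif_neg h]
      · rw [sig_eq_sum_over uu I _ (fun i hi => dif_neg hi),
          ← Finset.sum_coe_sort I (fun i => (if h : i ∈ I then c (g.symm ⟨i, h⟩) else 0) • uu i)]
        refine Fintype.sum_equiv g.toEquiv _ _ (fun m => ?_)
        show c m • uu (g m) = _
        have hge : g.toEquiv m = g m := rfl
        rw [hge, dif_pos (g m).2, Subtype.coe_eta, OrderIso.symm_apply_apply]

omit hbasis hsum in
lemma sig_singleton (i : Fin (n + 1)) :
    sig uu {i} = {x | ∃ c : ℝ, 0 ≤ c ∧ x = c • uu i} := by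
  ext x
  constructor
  · rintro ⟨c, hc0, hcI, rfl⟩
    refine ⟨c i, hc0 i, ?_⟩
    rw [Finset.sum_eq_single i (fun b _ hb => by rw [hcI b (by simp [hb]), zero_smul]) (by simp)]
  · rintro ⟨c, hc0, rfl⟩
    refine ⟨fun i' => if i' = i then c else 0, fun i' => by positivity,
      fun i' hi' => if_neg (by simpa using hi'), ?_⟩
    rw [Finset.sum_eq_single i (fun b _ hb => by simp [hb]) (by simp)]
    simp

include hbasis hsum in
lemma sig_eq_index (hn : 0 < n) {I I' : Finset (Fin (n + 1))} (hI : I ≠ Finset.univ)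
    (hI' : I' ≠ Finset.univ) (h : sig uu I = sig uu I') : I = I' := by
  apply Finset.Subset.antisymm
  · intro i hi
    exact uu_mem_sig_index uu hbasis hsum hn (h ▸ uu_mem_sig uu hi)
  · intro i hi
    exact uu_mem_sig_index uu hbasis hsum hn (h ▸ uu_mem_sig uu hi)

end S5e
section S5f
variable {n : ℕ}
variable (uu : Fin (n + 1) → V n)
variable (hbasis : AddSubgroup.closure (Set.range fun i : Fin n => uu i.succ) = latticePts n)
variable (hsum : ∑ i, uu i = 0)

omit hbasis hsum in
lemma exists_not_mem_of_card_le {I : Finset (Fin (n + 1))} (h : I.card ≤ n) :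
    ∃ j, j ∉ I := by
  by_contra hc
  push_neg at hc
  have := Finset.card_le_card (fun i _ => hc i : Finset.univ ⊆ I)
  simp only [Finset.card_univ, Fintype.card_fin] at this
  omega

omit hbasis hsum in
lemma ne_univ_of_card_le {I : Finset (Fin (n + 1))} (h : I.card ≤ n) :
    I ≠ Finset.univ := by
  intro hI
  rw [hI, Finset.card_univ, Fintype.card_fin] at h
  omega


open Classical in
noncomputable def markFn : Set (V n) → V n := fun σ =>
  if h : ∃ i, σ = {x | ∃ c : ℝ, 0 ≤ c ∧ x = c • uu i} then uu h.choose else 0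

include hbasis hsum in
lemma markFn_ray (i : Fin (n + 1)) :
    markFn uu ({x | ∃ c : ℝ, 0 ≤ c ∧ x = c • uu i}) = uu i := by
  have h : ∃ i', ({x | ∃ c : ℝ, 0 ≤ c ∧ x = c • uu i} : Set (V n)) =
      {x | ∃ c : ℝ, 0 ≤ c ∧ x = c • uu i'} := ⟨i, rfl⟩
  rw [markFn, dif_pos h]
  rcases Nat.eq_zero_or_pos n with hn | hn
  · subst hn
    exact funext fun j => absurd j.2 (by omega)
  · have heq : sig uu {i} = sig uu {h.choose} := by
      rw [sig_singleton, sig_singleton]; exact h.choose_spec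
    have h1 : ({i} : Finset (Fin (n + 1))) ≠ Finset.univ :=
      ne_univ_of_card_le (by simp; omega)
    have h2 : ({h.choose} : Finset (Fin (n + 1))) ≠ Finset.univ :=
      ne_univ_of_card_le (by simp; omega)
    have := sig_eq_index uu hbasis hsum hn h1 h2 heq
    exact congrArg uu (by simpa using this.symm)

lemma sig_empty : sig uu (∅ : Finset (Fin (n + 1))) = {0} := by
  ext x
  constructor
  · rintro ⟨c, _, hc, rfl⟩
    have : ∀ i, c i = 0 := fun i => hc i (Finset.notMem_empty i)
    simp [this]
  · rintro rfl
    exact zero_mem_sig uu ∅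

variable (k : ℕ) (hk : k ≤ n)
include hbasis hsum hk

/-- The fan `L_k^n`. -/
noncomputable def theFan : Fan n where
  cones := {σ | ∃ I : Finset (Fin (n + 1)), I.card ≤ k ∧ σ = sig uu I}
  finite := by
    have : {σ | ∃ I : Finset (Fin (n + 1)), I.card ≤ k ∧ σ = sig uu I} =
        (fun I => sig uu I) '' {I | I.card ≤ k} := by
      ext σ
      simp only [Set.mem_setOf_eq, Set.mem_image]
      exact ⟨fun ⟨I, h1, h2⟩ => ⟨I, h1, h2.symm⟩, fun ⟨I, h1, h2⟩ => ⟨I, h1, h2.symm⟩⟩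
    rw [this]
    exact Set.Finite.image _ (Set.toFinite _)
  isCone := by
    rintro σ ⟨I, hI, rfl⟩
    obtain ⟨j, hj⟩ := exists_not_mem_of_card_le (le_trans hI hk)
    exact isCone_sig uu hbasis hsum hj
  faces_mem := by
    rintro σ ⟨I, hI, rfl⟩ τ hface
    obtain ⟨J, hJI, rfl⟩ := face_of_sig uu hface
    exact ⟨J, le_trans (Finset.card_le_card hJI) hI, rfl⟩
  inter_face := by
    rintro σ₁ ⟨I₁, hI₁, rfl⟩ σ₂ ⟨I₂, hI₂, rfl⟩
    rw [sig_inter uu hbasis hsum (ne_univ_of_card_le (le_trans hI₁ hk))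
      (ne_univ_of_card_le (le_trans hI₂ hk))]
    obtain ⟨j, hj⟩ := exists_not_mem_of_card_le (le_trans hI₁ hk)
    exact isFace_sig uu hbasis hsum Finset.inter_subset_left hj

lemma theFan_conesOfDim_iff (d : ℕ) (σ : Set (V n)) :
    σ ∈ (theFan uu hbasis hsum k hk).conesOfDim d ↔
      ∃ I : Finset (Fin (n + 1)), I.card = d ∧ d ≤ k ∧ σ = sig uu I := by
  constructor
  · rintro ⟨⟨I, hI, rfl⟩, hdim⟩
    obtain ⟨j, hj⟩ := exists_not_mem_of_card_le (le_trans hI hk)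
    rw [coneDim_sig uu hbasis hsum hj] at hdim
    exact ⟨I, hdim, hdim ▸ hI, rfl⟩
  · rintro ⟨I, hI, hd, rfl⟩
    obtain ⟨j, hj⟩ := exists_not_mem_of_card_le (le_trans (hI ▸ hd) hk)
    exact ⟨⟨I, hI ▸ hd, rfl⟩, hI ▸ coneDim_sig uu hbasis hsum hj⟩

/-- The marked fan `L_k^n`. -/
noncomputable def theMarked : MarkedFan n k where
  toFan := theFan uu hbasis hsum k hk
  pure := by
    rintro σ ⟨I, hI, rfl⟩
    obtain ⟨I', hII', hI'⟩ := Finset.exists_superset_card_eq hI (by simp; omega)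
    refine ⟨sig uu I', ?_, sig_mono uu hII'⟩
    exact (theFan_conesOfDim_iff uu hbasis hsum k hk k _).mpr ⟨I', hI', le_refl k, rfl⟩
  simplicial := by
    rintro σ ⟨I, hI, rfl⟩
    obtain ⟨j, hj⟩ := exists_not_mem_of_card_le (le_trans hI hk)
    exact simplicial_sig uu hbasis hsum hj
  mark := markFn uu
  mark_mem := by
    intro σ hσ
    obtain ⟨I, hI1, hIk, rfl⟩ := (theFan_conesOfDim_iff uu hbasis hsum k hk 1 σ).mp hσ
    obtain ⟨i, rfl⟩ := Finset.card_eq_one.mp hI1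
    have hn : 0 < n := by omega
    obtain ⟨j, hj⟩ := exists_not_mem_of_card_le
      (show ({i} : Finset (Fin (n + 1))).card ≤ n by simp; omega)
    rw [sig_singleton, markFn_ray uu hbasis hsum i]
    refine ⟨⟨1, by norm_num, (one_smul ℝ _).symm⟩, ?_, uu_mem_lattice uu hbasis hsum i⟩
    have li := li_sig uu hbasis hsum hj
    exact li.ne_zero ⟨i, Finset.mem_singleton_self i⟩

lemma theMarked_weight_one (σ : Set (V n))
    (hσ : σ ∈ (theMarked uu hbasis hsum k hk).toFan.conesOfDim k) :
    (theMarked uu hbasis hsum k hk).weight σ = 1 := by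
  obtain ⟨I, hIcard, _, rfl⟩ := (theFan_conesOfDim_iff uu hbasis hsum k hk k σ).mp hσ
  rw [MarkedFan.weight, AddSubgroup.relIndex_eq_one]
  obtain ⟨j, hj⟩ := exists_not_mem_of_card_le (le_trans (le_of_eq hIcard) hk)
  rw [coneLattice_sig uu hbasis hsum hj, AddSubgroup.closure_le]
  rintro x ⟨i, hi, rfl⟩
  rcases Nat.eq_zero_or_pos k with hk0 | hk1
  · exfalso
    rw [hk0, Finset.card_eq_zero] at hIcard
    subst hIcard
    exact (Finset.notMem_empty i) (by simpa using hi)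
  · -- uu i is the mark of the edge sig {i}, a face of sig I
    apply AddSubgroup.subset_closure
    refine ⟨sig uu {i}, ⟨?_, ?_⟩, ?_⟩
    · exact (theFan_conesOfDim_iff uu hbasis hsum k hk 1 _).mpr
        ⟨{i}, Finset.card_singleton i, hk1, rfl⟩
    · exact isFace_sig uu hbasis hsum (Finset.singleton_subset_iff.mpr hi) hj
    · show markFn uu (sig uu {i}) = uu i
      rw [sig_singleton, markFn_ray uu hbasis hsum i]

end S5f
section S5g
variable {n : ℕ}
variable (uu : Fin (n + 1) → V n)
variable (hbasis : AddSubgroup.closure (Set.range fun i : Fin n => uu i.succ) = latticePts n)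
variable (hsum : ∑ i, uu i = 0)
include hbasis hsum

lemma repr_supp {I : Finset (Fin (n + 1))} {j : Fin (n + 1)} (hj : j ∉ I) {x : V n}
    (hx : x ∈ Submodule.span ℝ (uu '' I)) {m : Fin n} (hm : j.succAbove m ∉ I) :
    (bas uu hbasis hsum j).repr x m = 0 := by
  set B := bas uu hbasis hsum j with hB
  have hle : Submodule.span ℝ (uu '' I) ≤
      ⨅ (m : Fin n) (_ : j.succAbove m ∉ I), LinearMap.ker (B.coord m) := by
    rw [Submodule.span_le]
    rintro y ⟨i, hi, rfl⟩
    simp only [SetLike.mem_coe, Submodule.mem_iInf, LinearMap.mem_ker]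
    intro m' hm'
    have hne : (i : Fin (n + 1)) ≠ j := fun hij => hj (hij ▸ hi)
    obtain ⟨mi, hmi⟩ := Fin.exists_succAbove_eq hne
    have huB : uu i = B mi := by rw [hB, bas_apply, hmi]
    rw [Module.Basis.coord_apply, huB, Module.Basis.repr_self]
    have hne2 : mi ≠ m' := fun h => hm' (h ▸ hmi ▸ hi)
    simp [Finsupp.single_apply, hne2]
  have := hle hx
  simp only [SetLike.mem_coe, Submodule.mem_iInf, LinearMap.mem_ker] at this
  have := this m hm
  rwa [Module.Basis.coord_apply] at this

lemma sub_coord_smul_mem_span {J : Finset (Fin (n + 1))} {i j : Fin (n + 1)}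
    (hj : j ∉ insert i J) {mi : Fin n} (hmi : j.succAbove mi = i) {y : V n}
    (hy : y ∈ Submodule.span ℝ (uu '' (↑(insert i J) : Set (Fin (n + 1))))) :
    y - ((bas uu hbasis hsum j).repr y mi) • uu i ∈ Submodule.span ℝ (uu '' J) := by
  set B := bas uu hbasis hsum j with hB
  have hBi : B mi = uu i := by rw [hB, bas_apply, hmi]
  have hkey : y - (B.repr y mi) • uu i = ∑ m ∈ Finset.univ.erase mi, B.repr y m • B m := by
    rw [Finset.sum_erase_eq_sub (Finset.mem_univ mi), B.sum_repr, hBi]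
  rw [hkey]
  refine Submodule.sum_mem _ fun m hm => ?_
  by_cases hmJ : j.succAbove m ∈ J
  · exact Submodule.smul_mem _ _
      (Submodule.subset_span ⟨_, hmJ, by rw [hB, bas_apply]⟩)
  · have hmnotin : j.succAbove m ∉ insert i J := by
      rw [Finset.mem_insert]
      rintro (h | h)
      · exact (Finset.ne_of_mem_erase hm) (j.succAbove_right_injective (h.trans hmi.symm))
      · exact hmJ h
    rw [repr_supp uu hbasis hsum hj hy hmnotin, zero_smul]
    exact Submodule.zero_mem _

lemma normal_sub_mem {J : Finset (Fin (n + 1))} {i j : Fin (n + 1)}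
    (hiJ : i ∉ J) (hj : j ∉ insert i J) {u : V n}
    (hu : IsNormalVector (sig uu J) (sig uu (insert i J)) u) :
    u - uu i ∈ Submodule.span ℝ (uu '' J) := by
  obtain ⟨humem, hgen, g, hgτ, hgσ, hgu⟩ := hu
  set B := bas uu hbasis hsum j with hB
  have hij : i ≠ j := fun h => hj (h ▸ Finset.mem_insert_self i J)
  obtain ⟨mi, hmi⟩ := Fin.exists_succAbove_eq hij
  have hjJ : j ∉ J := fun h => hj (Finset.mem_insert_of_mem h)
  -- u is in the span and the lattice
  rw [coneLattice, AddSubgroup.mem_inf] at humem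
  obtain ⟨hus, hul⟩ := humem
  rw [Submodule.mem_toAddSubgroup, coneSpan_sig uu hbasis hsum] at hus
  obtain ⟨z, hz⟩ := repr_int uu hbasis hsum j hul mi
  -- su := u - z • uu i lies in span (uu '' J)
  have hsu : u - (B.repr u mi) • uu i ∈ Submodule.span ℝ (uu '' J) :=
    sub_coord_smul_mem_span uu hbasis hsum hj hmi hus
  -- the coordinate form is 1 on uu i and 0 on span (uu '' J)
  have hφi : B.repr (uu i) mi = 1 := by
    have : uu i = B mi := by rw [hB, bas_apply, hmi]
    rw [this, Module.Basis.repr_self]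
    simp
  have hφJ : ∀ y ∈ Submodule.span ℝ (uu '' J), B.repr y mi = 0 := fun y hy =>
    repr_supp uu hbasis hsum hjJ hy (hmi ▸ hiJ)
  -- apply the generation property to uu i
  have huuiL : uu i ∈ coneLattice (sig uu (insert i J)) := by
    rw [coneLattice, AddSubgroup.mem_inf]
    exact ⟨Submodule.mem_toAddSubgroup _ |>.mpr
      (by rw [coneSpan_sig uu hbasis hsum]
          exact Submodule.subset_span ⟨i, Finset.mem_insert_self i J, rfl⟩),
      uu_mem_lattice uu hbasis hsum i⟩
  obtain ⟨kk, hkk⟩ := hgen (uu i) huuiL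
  have hkkJ : uu i - kk • u ∈ Submodule.span ℝ (uu '' J) := by
    have := hkk
    rw [coneLattice, AddSubgroup.mem_inf] at this
    have h1 := this.1
    rw [Submodule.mem_toAddSubgroup, coneSpan_sig uu hbasis hsum] at h1
    exact h1
  -- coordinate computation: 1 - kk * z = 0
  have hcoord : (1 : ℝ) - (kk : ℝ) * (z : ℝ) = 0 := by
    have h0 := hφJ _ hkkJ
    have : B.repr (uu i - kk • u) mi = B.repr (uu i) mi - (kk : ℝ) * B.repr u mi := by
      rw [map_sub, Finsupp.sub_apply]
      congr 1
      have : (kk • u : V n) = (kk : ℝ) • u := by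
        rw [Int.cast_smul_eq_zsmul]
      rw [this, map_smul, Finsupp.smul_apply, smul_eq_mul]
    rw [this, hφi, hz] at h0
    exact h0
  have hkz : kk * z = 1 := by
    have : ((kk * z : ℤ) : ℝ) = 1 := by push_cast; linarith
    exact_mod_cast this
  -- sign analysis: z = 1
  have hgsu : g (u - (B.repr u mi) • uu i) = 0 := by
    apply hgτ
    rw [coneSpan_sig uu hbasis hsum]
    exact hsu
  have hgud : g u = (z : ℝ) * g (uu i) := by
    rw [map_sub, map_smul, smul_eq_mul, hz] at hgsu
    linarith
  have hgi : 0 ≤ g (uu i) := hgσ _ (uu_mem_sig uu (Finset.mem_insert_self i J))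
  have hz1 : z = 1 := by
    rcases Int.mul_eq_one_iff_eq_one_or_neg_one.mp hkz with ⟨_, h2⟩ | ⟨_, h2⟩
    · exact h2
    · exfalso
      rw [h2] at hgud
      push_cast at hgud
      linarith
  rw [hz1] at hz
  have := hsu
  rw [hz] at this
  simpa using this

end S5g
section S5h
variable {n : ℕ}
variable (uu : Fin (n + 1) → V n)
variable (hbasis : AddSubgroup.closure (Set.range fun i : Fin n => uu i.succ) = latticePts n)
variable (hsum : ∑ i, uu i = 0)
variable (k : ℕ) (hk : k ≤ n)
include hbasis hsum hk

lemma insert_facts (hk1 : 1 ≤ k) {J : Finset (Fin (n + 1))} (hJcard : J.card = k - 1)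
    {i : Fin (n + 1)} (hiJ : i ∉ J) :
    sig uu (insert i J) ∈ (theFan uu hbasis hsum k hk).conesOfDim k ∧
      IsFace (sig uu J) (sig uu (insert i J)) ∧ sig uu J ≠ sig uu (insert i J) := by
  have hcard : (insert i J).card = k := by
    rw [Finset.card_insert_of_notMem hiJ]; omega
  obtain ⟨j, hj⟩ := exists_not_mem_of_card_le (show (insert i J).card ≤ n by omega)
  refine ⟨(theFan_conesOfDim_iff uu hbasis hsum k hk k _).mpr ⟨_, hcard, le_refl k, rfl⟩,
    isFace_sig uu hbasis hsum (Finset.subset_insert i J) hj, ?_⟩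
  intro h
  have hjJ : j ∉ J := fun hh => hj (Finset.mem_insert_of_mem hh)
  have d1 := coneDim_sig uu hbasis hsum hjJ
  have d2 := coneDim_sig uu hbasis hsum hj
  rw [h, d2] at d1
  omega

open Classical in
lemma S_eq (hk1 : 1 ≤ k) {J : Finset (Fin (n + 1))} (hJcard : J.card = k - 1) :
    {σ | σ ∈ (theFan uu hbasis hsum k hk).conesOfDim k ∧
        IsFace (sig uu J) σ ∧ sig uu J ≠ σ}
      = ↑(Jᶜ.image (fun i => sig uu (insert i J))) := by
  have hn1 : 0 < n := lt_of_lt_of_le hk1 hk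
  ext σ
  rw [Finset.coe_image, Set.mem_image]
  constructor
  · rintro ⟨hσd, hface, hne⟩
    obtain ⟨I, hIc, hIk, rfl⟩ := (theFan_conesOfDim_iff uu hbasis hsum k hk k σ).mp hσd
    have hJI : J ⊆ I := fun jj hjj =>
      uu_mem_sig_index uu hbasis hsum hn1 (hface.2.2.1 (uu_mem_sig uu hjj))
    have hJneI : J ≠ I := fun h => hne (congrArg (sig uu) h)
    obtain ⟨i, hiI, hiJ⟩ := Finset.exists_of_ssubset (ssubset_of_subset_of_ne hJI hJneI)
    refine ⟨i, Finset.mem_coe.mpr (Finset.mem_compl.mpr hiJ), ?_⟩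
    have : insert i J = I := Finset.eq_of_subset_of_card_le
      (Finset.insert_subset hiI hJI)
      (by rw [Finset.card_insert_of_notMem hiJ]; omega)
    rw [this]
  · rintro ⟨i, hiJ, rfl⟩
    have hiJ' : i ∉ J := Finset.mem_compl.mp (Finset.mem_coe.mp hiJ)
    exact insert_facts uu hbasis hsum k hk hk1 hJcard hiJ'

open Classical in
lemma balance_sum (hk1 : 1 ≤ k) {J : Finset (Fin (n + 1))} (hJcard : J.card = k - 1)
    (F : Set (V n) → V n)
    (hF : ∀ i ∉ J, F (sig uu (insert i J)) - uu i ∈ Submodule.span ℝ (uu '' J)) :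
    (∑ᶠ σ ∈ {σ | σ ∈ (theFan uu hbasis hsum k hk).conesOfDim k ∧
        IsFace (sig uu J) σ ∧ sig uu J ≠ σ}, F σ) ∈ coneSpan (sig uu J) := by
  have hn1 : 0 < n := lt_of_lt_of_le hk1 hk
  rw [S_eq uu hbasis hsum k hk hk1 hJcard, finsum_mem_coe_finset]
  have hinj : ∀ x ∈ Jᶜ, ∀ y ∈ Jᶜ, sig uu (insert x J) = sig uu (insert y J) → x = y := by
    intro x hx y hy h
    have hxc : (insert x J).card ≤ n := by
      rw [Finset.card_insert_of_notMem (Finset.mem_compl.mp hx)]; omega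
    have hyc : (insert y J).card ≤ n := by
      rw [Finset.card_insert_of_notMem (Finset.mem_compl.mp hy)]; omega
    have heq := sig_eq_index uu hbasis hsum hn1 (ne_univ_of_card_le hxc)
      (ne_univ_of_card_le hyc) h
    have hx' := Finset.mem_insert_self x J
    rw [heq] at hx'
    rcases Finset.mem_insert.mp hx' with h' | h'
    · exact h'
    · exact absurd h' (Finset.mem_compl.mp hx)
  rw [Finset.sum_image hinj, coneSpan_sig uu hbasis hsum]
  have hsplit : ∑ i ∈ Jᶜ, F (sig uu (insert i J)) =
      (∑ i ∈ Jᶜ, (F (sig uu (insert i J)) - uu i)) + ∑ i ∈ Jᶜ, uu i := by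
    rw [Finset.sum_sub_distrib, sub_add_cancel]
  rw [hsplit]
  refine Submodule.add_mem _
    (Submodule.sum_mem _ fun i hi => hF i (Finset.mem_compl.mp hi)) ?_
  have hcompl : ∑ i ∈ Jᶜ, uu i = -∑ i ∈ J, uu i :=
    eq_neg_of_add_eq_zero_right (by rw [Finset.sum_add_sum_compl]; exact hsum)
  rw [hcompl]
  exact Submodule.neg_mem _
    (Submodule.sum_mem _ fun i hi => Submodule.subset_span ⟨i, hi, rfl⟩)

lemma relMark_eq (hk1 : 1 ≤ k) {J : Finset (Fin (n + 1))} (hJcard : J.card = k - 1)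
    {i : Fin (n + 1)} (hiJ : i ∉ J) {v : V n}
    (hv : (theMarked uu hbasis hsum k hk).IsRelMark (sig uu (insert i J)) (sig uu J) v) :
    v = uu i := by
  have hn1 : 0 < n := lt_of_lt_of_le hk1 hk
  obtain ⟨e, he1, heface, hentau, rfl⟩ := hv
  obtain ⟨I', hI'c, _, rfl⟩ := (theFan_conesOfDim_iff uu hbasis hsum k hk 1 e).mp he1
  obtain ⟨m, rfl⟩ := Finset.card_eq_one.mp hI'c
  have hm : m ∈ insert i J := uu_mem_sig_index uu hbasis hsum hn1
    (heface.2.2.1 (uu_mem_sig uu (Finset.mem_singleton_self m)))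
  have hmJ : m ∉ J := by
    intro hmJ
    obtain ⟨j, hj⟩ := exists_not_mem_of_card_le (show J.card ≤ n by omega)
    exact hentau (isFace_sig uu hbasis hsum (Finset.singleton_subset_iff.mpr hmJ) hj)
  have hmi : m = i := by
    rcases Finset.mem_insert.mp hm with h | h
    · exact h
    · exact absurd h hmJ
  subst hmi
  show markFn uu (sig uu {m}) = uu m
  rw [sig_singleton, markFn_ray uu hbasis hsum m]

end S5h
/-- Let `u_1, …, u_n` be a basis of the lattice `ℤ^n` and
`u_0 := −u_1 − ⋯ − u_n`. For `I ⊊ {0, …, n}` let `σ_I` be the simplicial cone in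
`ℝ^n` spanned by `{u_i : i ∈ I}`, and for `0 ≤ k ≤ n` let `L_k^n := {σ_I : |I| ≤ k}`.
Then `L_k^n` is a simplicial fan of pure dimension `k` in `ℝ^n`, and with the
markings `v_{σ_{{i}}} := u_i` (hence all weights equal to `1`) it is a tropical
fan, i.e. for every `τ ∈ (L_k^n)^{(k−1)}` the balancing condition
`Σ_{σ > τ} v_{σ/τ} = 0` holds in `ℝ^n/V_τ`.

Here `uu : Fin (n+1) → ℝ^n` lists `u_0, u_1, …, u_n` (so that `uu i.succ = u_i`
for `i = 1, …, n` form a lattice basis, and `∑ i, uu i = 0`, i.e.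
`uu 0 = −u_1 − ⋯ − u_n`). -/
theorem stmt_5 (n k : ℕ) (hk : k ≤ n) (uu : Fin (n + 1) → V n)
    (hbasis : AddSubgroup.closure (Set.range fun i : Fin n => uu i.succ) = latticePts n)
    (hsum : ∑ i, uu i = 0) :
    ∃ X : MarkedFan n k,
      -- the cones of the fan are exactly the cones `σ_I` for `|I| ≤ k`:
      X.toFan.cones = {σ | ∃ I : Finset (Fin (n + 1)), I.card ≤ k ∧
        σ = {x | ∃ c : Fin (n + 1) → ℝ, (∀ i, 0 ≤ c i) ∧ (∀ i ∉ I, c i = 0) ∧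
              x = ∑ i, c i • uu i}} ∧
      -- the markings of the edges are the vectors `u_i`:
      (∀ i : Fin (n + 1), X.mark {x | ∃ c : ℝ, 0 ≤ c ∧ x = c • uu i} = uu i) ∧
      -- all weights are `1`:
      (∀ σ ∈ X.toFan.conesOfDim k, X.weight σ = 1) ∧
      -- `L_k^n` is a tropical fan:
      IsBalanced X.toFan k (fun σ => (X.weight σ : ℤ)) ∧
      -- the balancing condition in terms of the markings:
      (∀ τ ∈ X.toFan.conesOfDim (k - 1),
        ∀ v : Set (V n) → V n,
          (∀ σ ∈ X.toFan.conesOfDim k, IsFace τ σ → τ ≠ σ → X.IsRelMark σ τ (v σ)) →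
          (∑ᶠ σ ∈ {σ | σ ∈ X.toFan.conesOfDim k ∧ IsFace τ σ ∧ τ ≠ σ}, v σ) ∈ coneSpan τ) := by
  refine ⟨theMarked uu hbasis hsum k hk, rfl, fun i => markFn_ray uu hbasis hsum i,
    fun σ hσ => theMarked_weight_one uu hbasis hsum k hk σ hσ, ?_, ?_⟩
  · -- IsBalanced
    intro τ hτ u hu
    rcases Nat.eq_zero_or_pos k with hk0 | hk1
    · -- k = 0 : the sum is empty
      subst hk0
      obtain ⟨J, hJc, _, rfl⟩ := (theFan_conesOfDim_iff uu hbasis hsum 0 hk (0 - 1) τ).mp hτ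
      have hempty : {σ | σ ∈ (theMarked uu hbasis hsum 0 hk).toFan.conesOfDim 0 ∧
          IsFace (sig uu J) σ ∧ sig uu J ≠ σ} = (∅ : Set (Set (V n))) := by
        ext σ
        simp only [Set.mem_empty_iff_false, iff_false, Set.mem_setOf_eq, not_and]
        intro hσ hface hne
        obtain ⟨I, hIc, _, rfl⟩ := (theFan_conesOfDim_iff uu hbasis hsum 0 hk 0 σ).mp hσ
        rw [Finset.card_eq_zero] at hIc hJc
        subst hIc; subst hJc
        exact hne rfl
      rw [hempty, finsum_mem_empty]
      exact Submodule.zero_mem _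
    · obtain ⟨J, hJc, _, rfl⟩ := (theFan_conesOfDim_iff uu hbasis hsum k hk (k - 1) τ).mp hτ
      have hcong : (∑ᶠ σ ∈ {σ | σ ∈ (theMarked uu hbasis hsum k hk).toFan.conesOfDim k ∧
            IsFace (sig uu J) σ ∧ sig uu J ≠ σ},
          ((theMarked uu hbasis hsum k hk).weight σ : ℤ) • u σ)
          = ∑ᶠ σ ∈ {σ | σ ∈ (theMarked uu hbasis hsum k hk).toFan.conesOfDim k ∧
            IsFace (sig uu J) σ ∧ sig uu J ≠ σ}, u σ := by
        refine finsum_mem_congr rfl (fun σ hσ => ?_)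
        rw [theMarked_weight_one uu hbasis hsum k hk σ hσ.1]
        norm_num
      rw [hcong]
      refine balance_sum uu hbasis hsum k hk hk1 hJc u (fun i hiJ => ?_)
      obtain ⟨hmem, hface, hne⟩ := insert_facts uu hbasis hsum k hk hk1 hJc hiJ
      have hnv := hu _ hmem hface hne
      obtain ⟨j, hj⟩ := exists_not_mem_of_card_le
        (show (insert i J).card ≤ n by rw [Finset.card_insert_of_notMem hiJ]; omega)
      exact normal_sub_mem uu hbasis hsum hiJ hj hnv
  · -- balancing via markings
    intro τ hτ v hv
    rcases Nat.eq_zero_or_pos k with hk0 | hk1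
    · subst hk0
      obtain ⟨J, hJc, _, rfl⟩ := (theFan_conesOfDim_iff uu hbasis hsum 0 hk (0 - 1) τ).mp hτ
      have hempty : {σ | σ ∈ (theMarked uu hbasis hsum 0 hk).toFan.conesOfDim 0 ∧
          IsFace (sig uu J) σ ∧ sig uu J ≠ σ} = (∅ : Set (Set (V n))) := by
        ext σ
        simp only [Set.mem_empty_iff_false, iff_false, Set.mem_setOf_eq, not_and]
        intro hσ hface hne
        obtain ⟨I, hIc, _, rfl⟩ := (theFan_conesOfDim_iff uu hbasis hsum 0 hk 0 σ).mp hσ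
        rw [Finset.card_eq_zero] at hIc hJc
        subst hIc; subst hJc
        exact hne rfl
      rw [hempty, finsum_mem_empty]
      exact Submodule.zero_mem _
    · obtain ⟨J, hJc, _, rfl⟩ := (theFan_conesOfDim_iff uu hbasis hsum k hk (k - 1) τ).mp hτ
      refine balance_sum uu hbasis hsum k hk hk1 hJc v (fun i hiJ => ?_)
      obtain ⟨hmem, hface, hne⟩ := insert_facts uu hbasis hsum k hk hk1 hJc hiJ
      have hrm := hv _ hmem hface hne
      rw [relMark_eq uu hbasis hsum k hk hk1 hJc hiJ hrm, sub_self]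
      exact Submodule.zero_mem _

end TropFan
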